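/- Let b ∈ ℝ⟦s,λ⟧ be defined as follows: with Tutte's series τ, set r := s·(1+λs)^{−1} + τ(λ), let g ∈ ℝ⟦s,λ⟧ be the unique formal power series with constant coefficient 1 satisfying g² = (1+r)² − 4s, and set b := s + (1+λs)·g. Write b = Σ_{l=0}^∞ B_l(s)·λˡ with B_l ∈ ℝ⟦s⟧. Fix l ≥ 0 and suppose that B_m is a polynomial in s for all m ≤ l. Then (s−1)·B_{l+1} is a polynomial in s. -/

import Mathlib

/- We realize `ℝ⟦s,λ⟧` as the iterated power series ring `(ℝ⟦s⟧)⟦λ⟧`: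
the inner variable is `s` and the outer variable is `λ`. -/

/-- The variable `s` in `(ℝ⟦s⟧)⟦λ⟧`. -/
noncomputable def sVar : PowerSeries (PowerSeries ℝ) :=
  PowerSeries.C PowerSeries.X

/-- The variable `λ` in `(ℝ⟦s⟧)⟦λ⟧`. -/
noncomputable def lVar : PowerSeries (PowerSeries ℝ) :=
  PowerSeries.X

/-- Tutte's series `τ(λ) = Σ_{i≥1} [2·(4i+1)! / ((i+1)!·(3i+2)!)]·λⁱ`,
viewed in `(ℝ⟦s⟧)⟦λ⟧`. -/
noncomputable def tutteSeries : PowerSeries (PowerSeries ℝ) :=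
  PowerSeries.mk fun i =>
    if i = 0 then 0
    else PowerSeries.C
      (2 * (Nat.factorial (4 * i + 1) : ℝ) /
        ((Nat.factorial (i + 1) : ℝ) * (Nat.factorial (3 * i + 2) : ℝ)))

open PowerSeries Finset

noncomputable abbrev Psub : Subring (PowerSeries ℝ) := (Polynomial.coeToPowerSeries.ringHom (R := ℝ)).range

noncomputable abbrev Phi : PowerSeries (Polynomial ℝ) →+* PowerSeries (PowerSeries ℝ) :=
  PowerSeries.map (Polynomial.coeToPowerSeries.ringHom (R := ℝ))

noncomputable abbrev Rsub : Subring (PowerSeries (PowerSeries ℝ)) := Phi.range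

lemma coeff_mem_P {f : PowerSeries (PowerSeries ℝ)} (hf : f ∈ Rsub) (n : ℕ) :
    PowerSeries.coeff n f ∈ Psub := by
  obtain ⟨F, rfl⟩ := hf
  exact ⟨PowerSeries.coeff n F, (PowerSeries.coeff_map _ _ _).symm⟩

lemma sVar_mem : sVar ∈ Rsub :=
  ⟨PowerSeries.C Polynomial.X, by
    rw [show Phi (PowerSeries.C Polynomial.X)
        = PowerSeries.C (Polynomial.coeToPowerSeries.ringHom Polynomial.X) from
      PowerSeries.map_C _ _]
    simp [sVar, Polynomial.coeToPowerSeries.ringHom_apply]⟩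

lemma lVar_mem : lVar ∈ Rsub := ⟨PowerSeries.X, PowerSeries.map_X _⟩

lemma tutte_mem : tutteSeries ∈ Rsub := by
  refine ⟨PowerSeries.mk fun i =>
    if i = 0 then 0
    else Polynomial.C
      (2 * (Nat.factorial (4 * i + 1) : ℝ) /
        ((Nat.factorial (i + 1) : ℝ) * (Nat.factorial (3 * i + 2) : ℝ))), ?_⟩
  ext n
  by_cases h : n = 0 <;>
    simp [h, PowerSeries.coeff_map, PowerSeries.coeff_mk, tutteSeries,
      Polynomial.coeToPowerSeries.ringHom_apply, Polynomial.coe_C]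


/-- With `r = s·(1+λs)⁻¹ + τ(λ)`, `g` the unique square root of
`(1+r)² − 4s` with constant coefficient `1`, `b = s + (1+λs)·g`, and
`b = Σ_l B_l(s)·λˡ`: if `B_m` is a polynomial in `s` for all `m ≤ l`, then
`(s−1)·B_{l+1}` is a polynomial in `s`. -/
theorem sMinusOne_mul_next_coeff_polynomial
    (inv r g b : PowerSeries (PowerSeries ℝ))
    (hinv : (1 + lVar * sVar) * inv = 1)
    (hr : r = sVar * inv + tutteSeries)
    (hg1 : PowerSeries.constantCoeff
      (PowerSeries.constantCoeff g) = 1)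
    (hg2 : g ^ 2 = (1 + r) ^ 2 - 4 * sVar)
    (hb : b = sVar + (1 + lVar * sVar) * g)
    (l : ℕ)
    (hpoly : ∀ m ≤ l, ∃ p : Polynomial ℝ,
      (p : PowerSeries ℝ) = PowerSeries.coeff m b) :
    ∃ q : Polynomial ℝ,
      (q : PowerSeries ℝ) =
        (PowerSeries.X - 1) * PowerSeries.coeff (l + 1) b := by
  classical
  set cc := (PowerSeries.constantCoeff : PowerSeries (PowerSeries ℝ) →+* PowerSeries ℝ) with hccdef
  -- constant coefficients in λ
  have hccs : cc sVar = PowerSeries.X := PowerSeries.constantCoeff_C _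
  have hccl : cc lVar = 0 := PowerSeries.constantCoeff_X
  have hcct : cc tutteSeries = 0 := by
    simp [tutteSeries, hccdef, PowerSeries.constantCoeff_mk]
  have hccinv : cc inv = 1 := by
    have := congrArg cc hinv
    simp only [map_mul, map_add, map_one, hccl, hccs, zero_mul, add_zero, one_mul] at this
    exact this
  have hccr : cc r = PowerSeries.X := by
    have := congrArg cc hr
    simpa [map_add, map_mul, hccs, hcct, hccinv] using this
  -- constant coefficient of g is 1 - X
  have hccg : cc g = 1 - PowerSeries.X := by
    have h2 : (cc g) ^ 2 = (1 + PowerSeries.X) ^ 2 - 4 * PowerSeries.X := by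
      have := congrArg cc hg2
      simpa [map_pow, map_sub, map_add, map_mul, map_one, hccr, hccs, map_ofNat] using this
    have h3 : (cc g - (1 - PowerSeries.X)) * (cc g + (1 - PowerSeries.X)) = 0 := by
      linear_combination h2
    rcases mul_eq_zero.mp h3 with h | h
    · exact sub_eq_zero.mp h
    · exfalso
      have := congrArg (PowerSeries.constantCoeff) h
      simp [map_add, map_sub, map_one, hg1] at this
  -- B_0 = 1
  have hb0 : cc b = 1 := by
    have := congrArg cc hb
    simp only [map_add, map_mul, map_one, hccs, hccl, hccg, zero_mul, add_zero, one_mul] at this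
    rw [this]; ring
  -- b - 1 is divisible by lVar
  obtain ⟨e, he⟩ : (lVar ∣ b - 1) := by
    rw [lVar, PowerSeries.X_dvd_iff]
    simp [← hccdef, hb0]
  -- the algebraic identity
  set A : PowerSeries (PowerSeries ℝ) :=
    (1 + lVar * sVar + sVar + (1 + lVar * sVar) * tutteSeries) ^ 2
      - 4 * sVar * (1 + lVar * sVar) ^ 2 with hA
  have h1 : (1 + lVar * sVar) * (1 + r)
      = 1 + lVar * sVar + sVar + (1 + lVar * sVar) * tutteSeries := by
    linear_combination (1 + lVar * sVar) * hr + sVar * hinv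
  have main : (b - sVar) ^ 2 = A := by
    rw [hA]
    linear_combination (b - sVar + (1 + lVar * sVar) * g) * hb
      + (1 + lVar * sVar) ^ 2 * hg2
      + ((1 + lVar * sVar) * (1 + r)
          + (1 + lVar * sVar + sVar + (1 + lVar * sVar) * tutteSeries)) * h1
  set w : PowerSeries (PowerSeries ℝ) := b + 1 - 2 * sVar with hw
  have main2 : lVar * (e * w) = A - (1 - sVar) ^ 2 := by
    rw [hw]
    linear_combination main - (b + 1 - 2 * sVar) * he
  -- membership facts
  have hmem1 : (1 : PowerSeries (PowerSeries ℝ)) ∈ Rsub := one_mem _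
  have h4mem : (4 : PowerSeries (PowerSeries ℝ)) ∈ Rsub := by
    simpa using natCast_mem Rsub 4
  have h2mem : (2 : PowerSeries (PowerSeries ℝ)) ∈ Rsub := by
    simpa using natCast_mem Rsub 2
  have hAmem : A - (1 - sVar) ^ 2 ∈ Rsub := by
    refine sub_mem (sub_mem (pow_mem ?_ 2) (mul_mem (mul_mem h4mem sVar_mem)
      (pow_mem (add_mem hmem1 (mul_mem lVar_mem sVar_mem)) 2)))
      (pow_mem (sub_mem hmem1 sVar_mem) 2)
    exact add_mem (add_mem (add_mem hmem1 (mul_mem lVar_mem sVar_mem)) sVar_mem)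
      (mul_mem (add_mem hmem1 (mul_mem lVar_mem sVar_mem)) tutte_mem)
  -- coefficients of b up to l are in Psub
  have hbP : ∀ m ≤ l, PowerSeries.coeff m b ∈ Psub := by
    intro m hm
    obtain ⟨p, hp⟩ := hpoly m hm
    exact ⟨p, by rw [Polynomial.coeToPowerSeries.ringHom_apply]; exact hp⟩
  -- coefficients of e
  have hecoeff : ∀ n : ℕ, PowerSeries.coeff n e
      = PowerSeries.coeff (n + 1) b := by
    intro n
    have := congrArg (PowerSeries.coeff (n + 1)) he
    rw [lVar, PowerSeries.coeff_succ_X_mul] at this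
    simp only [map_sub, PowerSeries.coeff_one, Nat.succ_ne_zero, if_false, sub_zero] at this
    exact this.symm
  -- coeff 0 of w
  have hw0 : PowerSeries.coeff 0 w = 2 - 2 * PowerSeries.X := by
    rw [PowerSeries.coeff_zero_eq_constantCoeff]
    simp only [hw, map_sub, map_add, map_mul, map_one, ← hccdef, hb0, hccs]
    have : cc 2 = 2 := map_ofNat cc 2
    rw [this]; ring
  -- coefficients of w up to l are in Psub
  have hwP : ∀ m ≤ l, PowerSeries.coeff m w ∈ Psub := by
    intro m hm
    have h1s : (1 : PowerSeries (PowerSeries ℝ)) - 2 * sVar ∈ Rsub :=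
      sub_mem hmem1 (mul_mem h2mem sVar_mem)
    have : PowerSeries.coeff m w
        = PowerSeries.coeff m b
          + PowerSeries.coeff m (1 - 2 * sVar) := by
      rw [hw]; rw [← map_add]; ring_nf
    rw [this]
    exact add_mem (hbP m hm) (coeff_mem_P h1s m)
  -- extract coefficient l+1 of main2
  have hmeml : ((l, 0) : ℕ × ℕ) ∈ Finset.HasAntidiagonal.antidiagonal l := by
    simp [Finset.mem_antidiagonal]
  have hsum : PowerSeries.coeff (l + 1) (A - (1 - sVar) ^ 2)
      = ∑ ij ∈ Finset.HasAntidiagonal.antidiagonal l,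
          PowerSeries.coeff ij.1 e
            * PowerSeries.coeff ij.2 w := by
    rw [← main2, lVar, PowerSeries.coeff_succ_X_mul, PowerSeries.coeff_mul]
  have hrest : ∑ ij ∈ (Finset.HasAntidiagonal.antidiagonal l).erase (l, 0),
      PowerSeries.coeff ij.1 e
        * PowerSeries.coeff ij.2 w ∈ Psub := by
    refine sum_mem ?_
    rintro ⟨i, j⟩ hij
    rw [Finset.mem_erase, Finset.HasAntidiagonal.mem_antidiagonal] at hij
    have hil : i < l := by
      by_contra hcon
      push_neg at hcon
      have hi : i = l := by omega
      have hj : j = 0 := by omega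
      exact hij.1 (by rw [hi, hj])
    have he1 : PowerSeries.coeff i e ∈ Psub := by
      rw [hecoeff]
      exact hbP (i + 1) (by omega)
    exact mul_mem he1 (hwP j (by omega))
  have heq : PowerSeries.coeff (l + 1) b * (2 - 2 * PowerSeries.X)
      = PowerSeries.coeff (l + 1) (A - (1 - sVar) ^ 2)
        - ∑ ij ∈ (Finset.HasAntidiagonal.antidiagonal l).erase (l, 0),
            PowerSeries.coeff ij.1 e
              * PowerSeries.coeff ij.2 w := by
    rw [hsum, ← Finset.sum_erase_add _ _ hmeml, hecoeff, hw0]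
    ring
  have hfin : PowerSeries.coeff (l + 1) b * (2 - 2 * PowerSeries.X)
      ∈ Psub := heq ▸ sub_mem (coeff_mem_P hAmem (l + 1)) hrest
  have hChalf : (PowerSeries.C (R := ℝ) (-(1/2))) ∈ Psub :=
    ⟨Polynomial.C (-(1/2)), by
      rw [Polynomial.coeToPowerSeries.ringHom_apply, Polynomial.coe_C]⟩
  have hfinal : (PowerSeries.X - 1) * PowerSeries.coeff (l + 1) b
      ∈ Psub := by
    have hkey : (PowerSeries.C (R := ℝ) (-(1/2))) * (2 - 2 * PowerSeries.X)
        = PowerSeries.X - 1 := by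
      rw [show (2 : PowerSeries ℝ) = PowerSeries.C 2 from (map_ofNat _ 2).symm,
        mul_sub, ← map_mul, ← mul_assoc, ← map_mul]
      norm_num
      ring
    have hid : (PowerSeries.X - 1 : PowerSeries ℝ)
        * PowerSeries.coeff (l + 1) b
        = PowerSeries.C (R := ℝ) (-(1/2))
          * (PowerSeries.coeff (l + 1) b * (2 - 2 * PowerSeries.X)) := by
      rw [← hkey]; ring
    rw [hid]
    exact mul_mem hChalf hfin
  obtain ⟨q, hq⟩ := hfinal
  exact ⟨q, by rw [← Polynomial.coeToPowerSeries.ringHom_apply]; exact hq⟩
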